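/- Let V₁,…,V_n ⊆ ℝ^ℓ be subspaces with V₁ + ⋯ + V_n = ℝ^ℓ, let kᵢ = dim Vᵢ, fix bases {v_{i1},…,v_{ik_i}} of each Vᵢ, and let γ ∈ ℝ^m (m = Σkᵢ) with γ_{ij} = pᵢ where p ∈ ℝⁿ lies in the convex hull of indicators of admissible basis sets. Then the function f(t, R₁,…,R_n) = ⟨γ, t⟩ − ln det(Σ_{i,j} e^{t_{ij}} x_{ij}x_{ij}ᵀ), where [x_{i1},…,x_{ik_i}] = [v_{i1},…,v_{ik_i}]Rᵢ with Rᵢ ∈ O(kᵢ), is bounded above by a constant independent of t and the Rᵢ. -/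

import Mathlib

open Finset Matrix

-- L4: det(1+C) ≥ 1 for PSD C
lemma aux_one_le_det_one_add {m : Type*} [Fintype m] [DecidableEq m]
    {C : Matrix m m ℝ} (hC : C.PosSemidef) : 1 ≤ (1 + C).det := by
  have h1 : (1 + C).IsHermitian := Matrix.isHermitian_one.add hC.1
  have heig : ∀ i, 1 ≤ h1.eigenvalues i := by
    intro i
    have := h1.eigenvalues_eq i
    set u : m → ℝ := ⇑(h1.eigenvectorBasis i) with hu
    have hsplit : star u ⬝ᵥ ((1 + C) *ᵥ u) = star u ⬝ᵥ u + star u ⬝ᵥ (C *ᵥ u) := by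
      rw [Matrix.add_mulVec, Matrix.one_mulVec, dotProduct_add]
    have huu : star u ⬝ᵥ u = 1 := by
      have hnorm : ‖h1.eigenvectorBasis i‖ = 1 := h1.eigenvectorBasis.orthonormal.1 i
      have : (inner ℝ (h1.eigenvectorBasis i) (h1.eigenvectorBasis i) : ℝ) = star u ⬝ᵥ u := by
        rw [EuclideanSpace.inner_eq_star_dotProduct, dotProduct_comm]
      rw [← this, real_inner_self_eq_norm_sq, hnorm]; norm_num
    have hCu : 0 ≤ star u ⬝ᵥ (C *ᵥ u) := hC.dotProduct_mulVec_nonneg u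
    rw [this, hsplit, huu]
    simpa using hCu
  have h2 : (1:ℝ) ≤ ∏ i, h1.eigenvalues i := by
    have := Finset.prod_le_prod (s := Finset.univ) (f := fun _ : m => (1:ℝ))
      (g := h1.eigenvalues) (by intro i _; norm_num) (fun i _ => heig i)
    simpa using this
  have h3 : (1 + C).det = ∏ i, h1.eigenvalues i := by
    rw [h1.det_eq_prod_eigenvalues]; norm_num
  linarith

-- PSD + det ≠ 0 → PosDef
lemma aux_posDef_of_det_ne_zero {m : Type*} [Fintype m] [DecidableEq m]
    {A : Matrix m m ℝ} (hA : A.PosSemidef) (hdet : A.det ≠ 0) : A.PosDef := by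
  exact hA.posDef_iff_isUnit.2 ((Matrix.isUnit_iff_isUnit_det A).2 (isUnit_iff_ne_zero.2 hdet))

-- det monotone: A PSD, B PSD → det A ≤ det (A+B)
lemma aux_det_le_det_add {m : Type*} [Fintype m] [DecidableEq m]
    {A B : Matrix m m ℝ} (hA : A.PosSemidef) (hB : B.PosSemidef) :
    A.det ≤ (A + B).det := by
  rcases eq_or_ne A.det 0 with h0 | h0
  · rw [h0]
    have : (A + B).PosSemidef := hA.add hB
    -- det of PSD is nonneg
    have h2 : (0:ℝ) ≤ ∏ i, this.1.eigenvalues i :=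
      Finset.prod_nonneg fun i _ => this.eigenvalues_nonneg i
    have h3 : (A + B).det = ∏ i, this.1.eigenvalues i := by
      rw [this.1.det_eq_prod_eigenvalues]; norm_num
    linarith
  · have hPD : A.PosDef := aux_posDef_of_det_ne_zero hA h0
    obtain ⟨S, hSpsd, hSS⟩ : ∃ S : Matrix m m ℝ, S.PosSemidef ∧ S * S = A := by
      open scoped MatrixOrder in
      exact ⟨CFC.sqrt A, (CFC.sqrt_nonneg A).posSemidef, CFC.sqrt_mul_sqrt_self A hA.nonneg⟩
    have hdetS : S.det ≠ 0 := fun h => h0 (by rw [← hSS, Matrix.det_mul, h, mul_zero])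
    have hSinv : S * S⁻¹ = 1 := Matrix.mul_nonsing_inv S (isUnit_iff_ne_zero.2 hdetS)
    have hinvS : S⁻¹ * S = 1 := Matrix.nonsing_inv_mul S (isUnit_iff_ne_zero.2 hdetS)
    have hSiH : (S⁻¹)ᴴ = S⁻¹ := by
      rw [Matrix.conjTranspose_nonsing_inv, hSpsd.1]
    set C := S⁻¹ * B * S⁻¹ with hC
    have hCpsd : C.PosSemidef := by
      have := hB.mul_mul_conjTranspose_same (S⁻¹)
      rwa [hSiH] at this
    have hid : A + B = S * (1 + C) * S := by
      have hB2 : S * (S⁻¹ * B * S⁻¹) * S = B := by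
        calc S * (S⁻¹ * B * S⁻¹) * S = (S * S⁻¹) * B * (S⁻¹ * S) := by
              simp only [Matrix.mul_assoc]
          _ = B := by rw [hSinv, hinvS, one_mul, Matrix.mul_one]
      rw [Matrix.mul_add, mul_one, Matrix.add_mul, hSS, hC, hB2]
    have h1 : (1:ℝ) ≤ (1 + C).det := aux_one_le_det_one_add hCpsd
    have hdetA : A.det = S.det * S.det := by rw [← hSS, Matrix.det_mul]
    have hApos : 0 < A.det := hPD.det_pos
    have : (A + B).det = A.det * (1 + C).det := by
      rw [hid, Matrix.det_mul, Matrix.det_mul, hdetA]; ring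
    rw [this]
    nlinarith

lemma aux_psd_sum {m : Type*} [Fintype m] [DecidableEq m] {ι : Type*} (s : Finset ι)
    (f : ι → Matrix m m ℝ) (h : ∀ i ∈ s, (f i).PosSemidef) : (∑ i ∈ s, f i).PosSemidef :=
  Finset.sum_induction f _ (fun _ _ ha hb => ha.add hb) Matrix.PosSemidef.zero h

lemma aux_psd_term {ℓ : ℕ} (c : ℝ) (hc : 0 ≤ c) (x : Fin ℓ → ℝ) :
    (c • Matrix.vecMulVec x x).PosSemidef := by
  rw [posSemidef_iff_dotProduct_mulVec]
  constructor
  · ext a b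
    simp [Matrix.conjTranspose_apply, Matrix.vecMulVec_apply, mul_comm]
  · intro y
    have h1 : (c • Matrix.vecMulVec x x) *ᵥ y = (c * (x ⬝ᵥ y)) • x := by
      ext a
      simp [Matrix.mulVec, Matrix.vecMulVec_apply, dotProduct, Finset.mul_sum,
        Finset.sum_mul]
      congr 1; ext j; ring
    rw [h1]
    simp only [star_trivial, dotProduct_smul, smul_eq_mul]
    have : y ⬝ᵥ x = x ⬝ᵥ y := dotProduct_comm y x
    rw [this]
    nlinarith [mul_self_nonneg (x ⬝ᵥ y)]

lemma aux_key (ℓ n : ℕ) (k : Fin n → ℕ) (v : (i : Fin n) → Fin (k i) → (Fin ℓ → ℝ))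
    (H : Finset (Fin n))
    (hcard : Fintype.card ((i : {x // x ∈ H}) × Fin (k i.1)) = ℓ)
    (hLI : LinearIndependent ℝ (fun d : (i : {x // x ∈ H}) × Fin (k i.1) => v d.1.1 d.2)) :
    ∃ c : ℝ, 0 < c ∧ ∀ (t : (i : Fin n) → Fin (k i) → ℝ)
      (R : (i : Fin n) → Matrix (Fin (k i)) (Fin (k i)) ℝ),
      (∀ i, R i ∈ Matrix.orthogonalGroup (Fin (k i)) ℝ) →
      c * Real.exp (∑ i ∈ H, ∑ j, t i j) ≤
        (∑ i, ∑ j, Real.exp (t i j) • Matrix.vecMulVec (∑ j', R i j' j • v i j')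
          (∑ j', R i j' j • v i j')).det := by
  classical
  set ι := (i : {x // x ∈ H}) × Fin (k i.1) with hι
  let e : ι ≃ Fin ℓ := Fintype.equivFinOfCardEq hcard
  set W₀ : Matrix (Fin ℓ) (Fin ℓ) ℝ := fun a c => v (e.symm c).1.1 (e.symm c).2 a with hW₀
  have hdetW₀ : W₀.det ≠ 0 := by
    have hli2 : LinearIndependent ℝ (fun c : Fin ℓ => W₀ᵀ c) := by
      have := hLI.comp e.symm e.symm.injective
      exact this
    have : IsUnit W₀ := Matrix.linearIndependent_cols_iff_isUnit.1 hli2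
    exact ((Matrix.isUnit_iff_isUnit_det W₀).1 this).ne_zero
  refine ⟨W₀.det ^ 2, by positivity, ?_⟩
  intro t R hR
  set x : (i : Fin n) → Fin (k i) → (Fin ℓ → ℝ) := fun i j => ∑ j', R i j' j • v i j' with hx
  set W : Matrix (Fin ℓ) (Fin ℓ) ℝ := fun a c => x (e.symm c).1.1 (e.symm c).2 a with hW
  set D : Matrix (Fin ℓ) (Fin ℓ) ℝ :=
    Matrix.diagonal (fun c : Fin ℓ => Real.exp (t (e.symm c).1.1 (e.symm c).2)) with hD
  -- Step A : W = W₀ * Rsq with Rsq "orthogonal"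
  set Rblk : Matrix ι ι ℝ := Matrix.blockDiagonal' (fun i : {x // x ∈ H} => R i.1) with hRblk
  set Rsq : Matrix (Fin ℓ) (Fin ℓ) ℝ := Rblk.submatrix e.symm e.symm with hRsq
  have hWmul : W = W₀ * Rsq := by
    ext a c
    rw [Matrix.mul_apply]
    have h1 : ∑ c' : Fin ℓ, W₀ a c' * Rsq c' c
        = ∑ d : ι, v d.1.1 d.2 a * Rblk d (e.symm c) := by
      rw [← Equiv.sum_comp e.symm (fun d => v d.1.1 d.2 a * Rblk d (e.symm c))]
      rfl
    rw [h1, ← Finset.univ_sigma_univ, Finset.sum_sigma]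
    rw [Finset.sum_eq_single (e.symm c).1]
    · have hWac : W a c = x (e.symm c).1.1 (e.symm c).2 a := rfl
      rw [hWac, hx]
      simp only [Finset.sum_apply, Pi.smul_apply, smul_eq_mul]
      refine Finset.sum_congr rfl fun j' _ => ?_
      rw [mul_comm]
      congr 1
      rw [hRblk]
      simp [Matrix.blockDiagonal'_apply]
    · intro i' _ hne
      apply Finset.sum_eq_zero
      intro j' _
      rw [hRblk]
      simp [Matrix.blockDiagonal'_apply, hne]
    · intro h; exact absurd (Finset.mem_univ _) h
  have hRsqOrth : Rsqᵀ * Rsq = 1 := by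
    have hblk : Rblkᵀ * Rblk = 1 := by
      rw [hRblk, Matrix.blockDiagonal'_transpose, ← Matrix.blockDiagonal'_mul]
      have : (fun i : {x // x ∈ H} => (R i.1)ᵀ * R i.1)
          = (1 : (i : {x // x ∈ H}) → Matrix (Fin (k i.1)) (Fin (k i.1)) ℝ) := by
        funext i
        show _ = (1 : Matrix (Fin (k i.1)) (Fin (k i.1)) ℝ)
        have := (Matrix.mem_unitaryGroup_iff').1 (hR i.1)
        rwa [Matrix.star_eq_conjTranspose, Matrix.conjTranspose_eq_transpose_of_trivial] at this
      rw [this, Matrix.blockDiagonal'_one]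
    rw [hRsq, Matrix.transpose_submatrix, Matrix.submatrix_mul_equiv, hblk,
      Matrix.submatrix_one_equiv]
  have hdetRsq : Rsq.det * Rsq.det = 1 := by
    have := congrArg Matrix.det hRsqOrth
    rwa [Matrix.det_mul, Matrix.det_transpose, Matrix.det_one] at this
  have hdetW : W.det ^ 2 = W₀.det ^ 2 := by
    rw [hWmul, Matrix.det_mul]
    ring_nf
    nlinarith [hdetRsq]
  -- Step B : M_H = W * D * Wᵀ
  set MH : Matrix (Fin ℓ) (Fin ℓ) ℝ :=
    ∑ i ∈ H, ∑ j, Real.exp (t i j) • Matrix.vecMulVec (x i j) (x i j) with hMH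
  have hsum_t : ∑ c, t (e.symm c).1.1 (e.symm c).2 = ∑ i ∈ H, ∑ j, t i j := by
    rw [Equiv.sum_comp e.symm (fun d : ι => t d.1.1 d.2), ← Finset.univ_sigma_univ,
      Finset.sum_sigma]
    rw [← Finset.sum_coe_sort H (fun i => ∑ j, t i j)]
  have hMHeq : MH = W * D * Wᵀ := by
    have hL : ∀ a b, (W * D * Wᵀ) a b
        = ∑ c, Real.exp (t (e.symm c).1.1 (e.symm c).2) * (W a c * W b c) := by
      intro a b
      rw [Matrix.mul_apply]
      refine Finset.sum_congr rfl fun c _ => ?_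
      rw [hD, Matrix.mul_diagonal, Matrix.transpose_apply]
      ring
    ext a b
    rw [hL a b]
    have hR2 : MH a b = ∑ i ∈ H, ∑ j, Real.exp (t i j) * (x i j a * x i j b) := by
      rw [hMH]
      simp [Matrix.sum_apply, Matrix.vecMulVec_apply, mul_assoc]
    rw [hR2]
    rw [Equiv.sum_comp e.symm
      (fun d : ι => Real.exp (t d.1.1 d.2) * (x d.1.1 d.2 a * x d.1.1 d.2 b)),
      ← Finset.univ_sigma_univ, Finset.sum_sigma]
    rw [← Finset.sum_coe_sort H (fun i => ∑ j, Real.exp (t i j) * (x i j a * x i j b))]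
  have hdetMH : MH.det = W.det ^ 2 * Real.exp (∑ i ∈ H, ∑ j, t i j) := by
    rw [hMHeq, Matrix.det_mul, Matrix.det_mul, Matrix.det_transpose, hD,
      Matrix.det_diagonal, ← Real.exp_sum, hsum_t]
    ring
  -- Step C : split the total sum
  have hMH_psd : MH.PosSemidef := by
    rw [hMH]
    exact aux_psd_sum _ _ fun i _ => aux_psd_sum _ _ fun j _ =>
      aux_psd_term _ (Real.exp_pos _).le _
  set P : Matrix (Fin ℓ) (Fin ℓ) ℝ :=
    ∑ i ∈ Finset.univ \ H, ∑ j, Real.exp (t i j) • Matrix.vecMulVec (x i j) (x i j) with hP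
  have hP_psd : P.PosSemidef := by
    rw [hP]
    exact aux_psd_sum _ _ fun i _ => aux_psd_sum _ _ fun j _ =>
      aux_psd_term _ (Real.exp_pos _).le _
  have hsplit : (∑ i, ∑ j, Real.exp (t i j) • Matrix.vecMulVec (x i j) (x i j)) = MH + P := by
    rw [hMH, hP, ← Finset.sum_sdiff (Finset.subset_univ H), add_comm]
  have hmono : MH.det ≤ (MH + P).det := aux_det_le_det_add hMH_psd hP_psd
  calc W₀.det ^ 2 * Real.exp (∑ i ∈ H, ∑ j, t i j)
      = MH.det := by rw [hdetMH, hdetW]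
    _ ≤ (MH + P).det := hmono
    _ = _ := by rw [← hsplit]

lemma aux_card_eq (ℓ n : ℕ) (V : Fin n → Submodule ℝ (Fin ℓ → ℝ))
    (k : Fin n → ℕ) (hk : ∀ i, Module.finrank ℝ (V i) = k i) (H : Finset (Fin n))
    (hfr : Module.finrank ℝ ↥(⨆ i ∈ H, V i) = ∑ i ∈ H, Module.finrank ℝ (V i))
    (hsup : (⨆ i ∈ H, V i) = ⊤) :
    Fintype.card ((i : {x // x ∈ H}) × Fin (k i.1)) = ℓ := by
  rw [Fintype.card_sigma]
  simp only [Fintype.card_fin]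
  have h1 : ∑ i : {x // x ∈ H}, k i.1 = ∑ i ∈ H, k i := Finset.sum_coe_sort H k
  rw [h1]
  have h2 : ∑ i ∈ H, k i = ∑ i ∈ H, Module.finrank ℝ (V i) :=
    Finset.sum_congr rfl fun i _ => (hk i).symm
  rw [h2, ← hfr, hsup]
  rw [finrank_top, Module.finrank_fin_fun]

lemma aux_span_top (ℓ n : ℕ) (V : Fin n → Submodule ℝ (Fin ℓ → ℝ))
    (k : Fin n → ℕ) (v : (i : Fin n) → Fin (k i) → (Fin ℓ → ℝ))
    (hbasis : ∀ i, Submodule.span ℝ (Set.range (v i)) = V i) (H : Finset (Fin n))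
    (hsup : (⨆ i ∈ H, V i) = ⊤) :
    Submodule.span ℝ (Set.range (fun d : (i : {x // x ∈ H}) × Fin (k i.1) => v d.1.1 d.2)) = ⊤ := by
  rw [Set.range_sigma_eq_iUnion_range, Submodule.span_iUnion]
  have h1 : ∀ i : {x // x ∈ H}, Submodule.span ℝ (Set.range fun j => v i.1 j) = V i.1 :=
    fun i => hbasis i.1
  simp_rw [h1]
  rw [← hsup]
  exact iSup_subtype

theorem stmt_12 (ℓ n : ℕ) (V : Fin n → Submodule ℝ (Fin ℓ → ℝ))
    (hspanall : (⨆ i, V i) = ⊤)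
    (k : Fin n → ℕ) (hk : ∀ i, Module.finrank ℝ (V i) = k i)
    (v : (i : Fin n) → Fin (k i) → (Fin ℓ → ℝ))
    (hmem : ∀ i j, v i j ∈ V i)
    (hbasis : ∀ i, LinearIndependent ℝ (v i) ∧ Submodule.span ℝ (Set.range (v i)) = V i)
    (p : Fin n → ℝ)
    (hp : p ∈ convexHull ℝ {x : Fin n → ℝ | ∃ H : Finset (Fin n),
      Module.finrank ℝ ↥(⨆ i ∈ H, V i) = ∑ i ∈ H, Module.finrank ℝ (V i) ∧
      (⨆ i ∈ H, V i) = ⊤ ∧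
      x = fun i => if i ∈ H then (1 : ℝ) else 0}) :
    ∃ C : ℝ, ∀ (t : (i : Fin n) → Fin (k i) → ℝ)
      (R : (i : Fin n) → Matrix (Fin (k i)) (Fin (k i)) ℝ),
      (∀ i, R i ∈ Matrix.orthogonalGroup (Fin (k i)) ℝ) →
      (∑ i, ∑ j, p i * t i j) -
        Real.log (Matrix.det (∑ i, ∑ j, Real.exp (t i j) •
          Matrix.vecMulVec (∑ j', R i j' j • v i j') (∑ j', R i j' j • v i j'))) ≤ C := by
  classical
  rw [mem_convexHull_iff_exists_fintype] at hp
  obtain ⟨σ, hfin, w, z, hw0, hw1, hz, hzp⟩ := hp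
  letI := hfin
  choose Hf hfr hsup hzf using hz
  have hcard : ∀ s, Fintype.card ((i : {x // x ∈ Hf s}) × Fin (k i.1)) = ℓ :=
    fun s => aux_card_eq ℓ n V k hk (Hf s) (hfr s) (hsup s)
  have hLI : ∀ s, LinearIndependent ℝ
      (fun d : (i : {x // x ∈ Hf s}) × Fin (k i.1) => v d.1.1 d.2) := by
    intro s
    have hspan := aux_span_top ℓ n V k v (fun i => (hbasis i).2) (Hf s) (hsup s)
    refine linearIndependent_of_top_le_span_of_card_eq_finrank (by rw [hspan]) ?_
    rw [hcard s, Module.finrank_fin_fun]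
  choose c hc hineq using fun s => aux_key ℓ n k v (Hf s) (hcard s) (hLI s)
  refine ⟨-∑ s, w s * Real.log (c s), ?_⟩
  intro t R hRo
  set Mdet := (∑ i, ∑ j, Real.exp (t i j) •
    Matrix.vecMulVec (∑ j', R i j' j • v i j') (∑ j', R i j' j • v i j')).det with hMdet
  have hlog : ∀ s, Real.log (c s) + ∑ i ∈ Hf s, ∑ j, t i j ≤ Real.log Mdet := by
    intro s
    have h1 := hineq s t R hRo
    have h2 : Real.log (c s * Real.exp (∑ i ∈ Hf s, ∑ j, t i j)) ≤ Real.log Mdet :=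
      Real.log_le_log (mul_pos (hc s) (Real.exp_pos _)) h1
    rwa [Real.log_mul (hc s).ne' (Real.exp_pos _).ne', Real.log_exp] at h2
  have hsum : ∑ s, w s * (Real.log (c s) + ∑ i ∈ Hf s, ∑ j, t i j) ≤ Real.log Mdet := by
    calc ∑ s, w s * (Real.log (c s) + ∑ i ∈ Hf s, ∑ j, t i j)
        ≤ ∑ s, w s * Real.log Mdet :=
          Finset.sum_le_sum fun s _ => mul_le_mul_of_nonneg_left (hlog s) (hw0 s)
      _ = Real.log Mdet := by
          rw [← Finset.sum_mul, show ∑ s : σ, w s = 1 from hw1, one_mul]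
  have hpt : ∑ i, ∑ j, p i * t i j = ∑ s, w s * ∑ i ∈ Hf s, ∑ j, t i j := by
    have hpi : ∀ i, p i = ∑ s, w s * (if i ∈ Hf s then (1:ℝ) else 0) := by
      intro i
      have := congrFun hzp i
      rw [← this]
      simp only [Finset.sum_apply, Pi.smul_apply, smul_eq_mul]
      exact Finset.sum_congr rfl fun s _ => by rw [hzf s]
    calc ∑ i, ∑ j, p i * t i j = ∑ i, p i * ∑ j, t i j := by
          simp_rw [Finset.mul_sum]
      _ = ∑ i, ∑ s, (w s * (if i ∈ Hf s then (1:ℝ) else 0)) * ∑ j, t i j := by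
          refine Finset.sum_congr rfl fun i _ => ?_
          rw [hpi i, Finset.sum_mul]
      _ = ∑ s, ∑ i, (w s * (if i ∈ Hf s then (1:ℝ) else 0)) * ∑ j, t i j :=
          Finset.sum_comm
      _ = ∑ s, w s * ∑ i ∈ Hf s, ∑ j, t i j := by
          refine Finset.sum_congr rfl fun s _ => ?_
          rw [Finset.mul_sum]
          rw [← Finset.sum_filter_of_ne (p := fun i => i ∈ Hf s)]
          · refine Finset.sum_congr ?_ fun i hi => ?_
            · ext i; simp
            · rw [if_pos hi]; ring
          · intro i _ hne
            by_contra hmem'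
            apply hne
            rw [if_neg hmem']
            ring
  have hexpand : ∑ s, w s * (Real.log (c s) + ∑ i ∈ Hf s, ∑ j, t i j)
      = ∑ s, w s * Real.log (c s) + ∑ s, w s * ∑ i ∈ Hf s, ∑ j, t i j := by
    rw [← Finset.sum_add_distrib]
    exact Finset.sum_congr rfl fun s _ => by ring
  rw [hpt]
  linarith [hsum, hexpand.symm.le]
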